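/- For integers r ≥ 1, h ≥ 1, a residue class c mod r, and real α, the exponential sum E_{r,c}(α) = Σ_{m ≤ h, m ≡ c mod r} e(mα) satisfies |E_{r,c}(α)| ≤ F_r(α), where F_r(α) = (1/r) Σ_{n=1}^{r} min{h, 1/‖α + n/r‖} and ‖x‖ denotes the distance from x to the nearest integer. -/

import Mathlib

open scoped BigOperators Real

/-- `e(x) = exp(2πix)`. -/
noncomputable def e (x : ℝ) : ℂ := Complex.exp (2 * π * Complex.I * x)

/-- `E_{r,c}(α) = Σ_{1 ≤ m ≤ h, m ≡ c (mod r)} e(mα)`. -/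
noncomputable def Erc (r : ℕ) (c : ZMod r) (h : ℕ) (α : ℝ) : ℂ :=
  ∑ m ∈ (Finset.Icc 1 h).filter (fun m => (Nat.cast m : ZMod r) = c), e ((m : ℝ) * α)

/-- `F_r(α) = (1/r) Σ_{n=1}^r min{h, 1/‖α+n/r‖}`, with the convention that the
summand is `h` when `α + n/r` is an integer. -/
noncomputable def Fr (r h : ℕ) (α : ℝ) : ℝ :=
  (1 / r) * ∑ n ∈ Finset.Icc 1 r,
    (if ‖((α + n / r : ℝ) : AddCircle (1 : ℝ))‖ = 0 then (h : ℝ)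
      else min (h : ℝ) (1 / ‖((α + n / r : ℝ) : AddCircle (1 : ℝ))‖))

lemma e_add (x y : ℝ) : e (x + y) = e x * e y := by
  simp [e, ← Complex.exp_add]; ring_nf

lemma norm_e (x : ℝ) : ‖e x‖ = 1 := by
  simp [e]
  rw [show 2 * (π:ℂ) * Complex.I * x = ((2 * π * x : ℝ) : ℂ) * Complex.I by push_cast; ring]
  exact Complex.norm_exp_ofReal_mul_I _

lemma e_int (n : ℤ) : e n = 1 := by
  rw [e, Complex.exp_eq_one_iff]
  exact ⟨n, by push_cast; ring⟩

lemma e_pow (x : ℝ) (n : ℕ) : e x ^ n = e (n * x) := by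
  rw [e, e, ← Complex.exp_nat_mul]; push_cast; ring_nf

lemma e_eq_one_iff (x : ℝ) : e x = 1 ↔ ∃ n : ℤ, x = n := by
  rw [e, Complex.exp_eq_one_iff]
  constructor
  · rintro ⟨n, hn⟩
    refine ⟨n, ?_⟩
    have h2 : (2 * (π:ℂ) * Complex.I) ≠ 0 := by
      simp [Real.pi_ne_zero, Complex.I_ne_zero]
    have : (x : ℂ) = n := by
      have h' : (2 * ↑π * Complex.I) * x = (2 * ↑π * Complex.I) * n := by
        rw [hn]; ring
      exact mul_left_cancel₀ h2 h'
    exact_mod_cast this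
  · rintro ⟨n, rfl⟩; exact ⟨n, by push_cast; ring⟩

lemma norm_e_sub_one (x : ℝ) : ‖e x - 1‖ = 2 * |Real.sin (π * x)| := by
  have h1 : e x = Complex.exp (((π * x : ℝ) : ℂ) * Complex.I) *
      Complex.exp (((π * x : ℝ) : ℂ) * Complex.I) := by
    rw [e, ← Complex.exp_add]; push_cast; ring_nf
  have h2 : e x - 1 = Complex.exp (((π * x : ℝ) : ℂ) * Complex.I) *
      (Complex.exp (((π * x : ℝ) : ℂ) * Complex.I) -
       Complex.exp (-(((π * x : ℝ) : ℂ) * Complex.I))) := by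
    rw [mul_sub, ← h1, ← Complex.exp_add]; simp
  have h3 : Complex.exp (((π * x : ℝ) : ℂ) * Complex.I) -
      Complex.exp (-(((π * x : ℝ) : ℂ) * Complex.I)) =
      2 * Complex.I * Complex.sin ((π * x : ℝ) : ℂ) := by
    rw [Complex.sin]; ring_nf; rw [Complex.I_sq]; ring
  rw [h2, h3]
  rw [norm_mul, Complex.norm_exp_ofReal_mul_I, one_mul, norm_mul, norm_mul]
  rw [← Complex.ofReal_sin]
  simp
  rw [show ((π:ℂ) * (x:ℂ)) = ((π * x : ℝ) : ℂ) by push_cast; ring, ← Complex.ofReal_sin,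
    Complex.norm_real, Real.norm_eq_abs]

lemma circleNorm_eq (x : ℝ) : ‖((x : ℝ) : AddCircle (1 : ℝ))‖ = |x - round x| := by
  rw [AddCircle.norm_eq]; simp

lemma norm_e_sub_one_ge (x : ℝ) : 4 * ‖((x : ℝ) : AddCircle (1 : ℝ))‖ ≤ ‖e x - 1‖ := by
  set y : ℝ := x - round x with hy
  have hxy : e x = e y := by
    have : x = y + (round x : ℤ) := by rw [hy]; push_cast; ring
    rw [this, e_add, e_int, mul_one]
  have habs : |y| ≤ 1 / 2 := by
    rw [hy]; exact abs_sub_round x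
  have hnorm : ‖((x : ℝ) : AddCircle (1 : ℝ))‖ = |y| := circleNorm_eq x
  rw [hnorm, hxy, norm_e_sub_one]
  have hsin : 2 / π * |π * y| ≤ |Real.sin (π * y)| := by
    apply Real.mul_abs_le_abs_sin
    rw [abs_mul, abs_of_pos Real.pi_pos]
    calc π * |y| ≤ π * (1/2) := by
          exact mul_le_mul_of_nonneg_left habs Real.pi_pos.le
      _ = π / 2 := by ring
  have : 2 / π * |π * y| = 2 * |y| := by
    rw [abs_mul, abs_of_pos Real.pi_pos]
    field_simp
  linarith [hsin, this ▸ hsin]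

lemma sum_e_bound (h : ℕ) (β : ℝ) :
    ‖∑ m ∈ Finset.Icc 1 h, e ((m : ℝ) * β)‖ ≤
      (if ‖((β : ℝ) : AddCircle (1 : ℝ))‖ = 0 then (h : ℝ)
        else min (h : ℝ) (1 / ‖((β : ℝ) : AddCircle (1 : ℝ))‖)) := by
  have htriv : ‖∑ m ∈ Finset.Icc 1 h, e ((m : ℝ) * β)‖ ≤ (h : ℝ) := by
    calc ‖∑ m ∈ Finset.Icc 1 h, e ((m : ℝ) * β)‖
        ≤ ∑ m ∈ Finset.Icc 1 h, ‖e ((m : ℝ) * β)‖ := norm_sum_le _ _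
      _ = ∑ m ∈ Finset.Icc 1 h, 1 := by
          refine Finset.sum_congr rfl fun m _ => norm_e _
      _ = (h : ℝ) := by simp
  split_ifs with h0
  · exact htriv
  · refine le_min htriv ?_
    set δ := ‖((β : ℝ) : AddCircle (1 : ℝ))‖ with hδ
    have hδpos : 0 < δ := lt_of_le_of_ne (norm_nonneg _) (Ne.symm h0)
    set z := e β with hz
    have hz1 : z ≠ 1 := by
      intro hcon
      rw [hz, e_eq_one_iff] at hcon
      obtain ⟨n, rfl⟩ := hcon
      apply h0
      rw [hδ, circleNorm_eq]
      simp
    have hsum : ∑ m ∈ Finset.Icc 1 h, e ((m : ℝ) * β)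
        = (z ^ (h+1) - 1) / (z - 1) - 1 := by
      have hterm : ∀ m : ℕ, e ((m : ℝ) * β) = z ^ m := fun m => (e_pow β m).symm ▸ rfl
      rw [← geom_sum_eq hz1 (h+1)]
      have hmem : (0 : ℕ) ∈ Finset.range (h+1) := by simp
      rw [Finset.sum_eq_sum_sdiff_singleton_add hmem (fun i => z ^ i)]
      have hset : Finset.range (h+1) \ {0} = Finset.Icc 1 h := by
        ext m; simp [Nat.lt_succ_iff]; omega
      rw [hset]
      simp [hterm]
    rw [hsum]
    have hz1' : z - 1 ≠ 0 := sub_ne_zero.mpr hz1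
    have hcalc : (z ^ (h+1) - 1) / (z - 1) - 1 = (z ^ (h+1) - z) / (z - 1) := by
      field_simp
      ring
    rw [hcalc]
    have hnum : ‖z ^ (h+1) - z‖ ≤ 2 := by
      calc ‖z ^ (h+1) - z‖ ≤ ‖z ^ (h+1)‖ + ‖z‖ := norm_sub_le _ _
        _ = 1 + 1 := by rw [norm_pow, hz, norm_e]; norm_num
        _ = 2 := by norm_num
    have hden : 4 * δ ≤ ‖z - 1‖ := norm_e_sub_one_ge β
    have hdenpos : 0 < ‖z - 1‖ := lt_of_lt_of_le (by linarith) hden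
    rw [norm_div]
    calc ‖z ^ (h+1) - z‖ / ‖z - 1‖ ≤ 2 / (4 * δ) := by
          exact div_le_div₀ (by norm_num) hnum (by linarith) hden
      _ ≤ 1 / δ := by
          rw [div_le_div_iff₀ (by linarith) hδpos]
          linarith

lemma orth (r : ℕ) (hr : 1 ≤ r) (k : ℤ) :
    ∑ n ∈ Finset.Icc 1 r, e ((n : ℝ) * ((k : ℝ) / r)) =
      if (r : ℤ) ∣ k then (r : ℂ) else 0 := by
  have hr0 : (r : ℝ) ≠ 0 := by positivity
  set z := e ((k : ℝ) / r) with hzdef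
  have hterm : ∀ n : ℕ, e ((n : ℝ) * ((k : ℝ) / r)) = z ^ n := fun n => (e_pow _ n).symm
  have hzr : z ^ r = 1 := by
    rw [e_pow, show (r : ℝ) * ((k : ℝ) / r) = (k : ℝ) by field_simp]
    exact e_int k
  split_ifs with hdvd
  · obtain ⟨d, rfl⟩ := hdvd
    have hz1 : z = 1 := by
      rw [hzdef, show ((r * d : ℤ) : ℝ) / r = (d : ℝ) by push_cast; field_simp]
      exact e_int d
    rw [Finset.sum_congr rfl fun n _ => hterm n]
    simp [hz1]
  · have hz1 : z ≠ 1 := by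
      intro hcon
      rw [hzdef, e_eq_one_iff] at hcon
      obtain ⟨n, hn⟩ := hcon
      apply hdvd
      refine ⟨n, ?_⟩
      have : (k : ℝ) = (r : ℝ) * n := by
        field_simp at hn; linarith [hn]
      exact_mod_cast this
    have hIcc : Finset.Icc 1 r = Finset.range (r+1) \ {0} := by
      ext m; simp [Nat.lt_succ_iff]; omega
    calc ∑ n ∈ Finset.Icc 1 r, e ((n : ℝ) * ((k : ℝ) / r))
        = ∑ n ∈ Finset.Icc 1 r, z ^ n := Finset.sum_congr rfl fun n _ => hterm n
      _ = ∑ n ∈ Finset.range (r+1), z ^ n - 1 := by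
          rw [hIcc, Finset.sum_sdiff_eq_sub (by simp)]; simp
      _ = ∑ n ∈ Finset.range r, z ^ n + z ^ r - 1 := by rw [Finset.sum_range_succ]
      _ = ∑ n ∈ Finset.range r, z ^ n := by rw [hzr]; ring
      _ = (z ^ r - 1) / (z - 1) := geom_sum_eq hz1 r
      _ = 0 := by rw [hzr]; simp

theorem stmt_7 (r h : ℕ) (hr : 1 ≤ r) (hh : 1 ≤ h) (c : ZMod r) (α : ℝ) :
    ‖Erc r c h α‖ ≤ Fr r h α := by
  classical
  haveI : NeZero r := ⟨by omega⟩
  have hr0 : (r : ℝ) ≠ 0 := by positivity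
  set c' : ℕ := c.val with hc'
  have key : Erc r c h α = (1 / (r : ℂ)) * ∑ n ∈ Finset.Icc 1 r,
      (e (-((n : ℝ) * c') / r) * ∑ m ∈ Finset.Icc 1 h, e ((m : ℝ) * (α + n / r))) := by
    rw [Erc, Finset.sum_filter]
    have step : ∀ m ∈ Finset.Icc 1 h,
        (if (Nat.cast m : ZMod r) = c then e ((m : ℝ) * α) else 0)
        = (1 / (r : ℂ)) * ∑ n ∈ Finset.Icc 1 r,
            e (-((n : ℝ) * c') / r) * e ((m : ℝ) * (α + n / r)) := by
      intro m _
      have hiff : ((Nat.cast m : ZMod r) = c) ↔ (r : ℤ) ∣ ((m : ℤ) - (c' : ℤ)) := by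
        rw [show c = ((c' : ℕ) : ZMod r) by rw [hc', ZMod.natCast_val, ZMod.cast_id],
          ZMod.natCast_eq_natCast_iff, Nat.modEq_iff_dvd, dvd_sub_comm]
      have horth : ∑ n ∈ Finset.Icc 1 r, e ((n : ℝ) * (((m : ℝ) - (c' : ℝ)) / r))
          = if (r : ℤ) ∣ ((m : ℤ) - (c' : ℤ)) then (r : ℂ) else 0 := by
        have h0 := orth r hr ((m : ℤ) - (c' : ℤ))
        push_cast at h0
        exact h0
      have hprod : ∀ n : ℕ, e (-((n : ℝ) * c') / r) * e ((m : ℝ) * (α + n / r))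
          = e ((m : ℝ) * α) * e ((n : ℝ) * (((m : ℝ) - (c' : ℝ)) / r)) := by
        intro n
        rw [← e_add, ← e_add]
        congr 1
        field_simp
        ring
      rw [Finset.sum_congr rfl (fun n _ => hprod n), ← Finset.mul_sum, horth]
      have hrC : (r : ℂ) ≠ 0 := Nat.cast_ne_zero.mpr (by omega)
      by_cases hcase : (Nat.cast m : ZMod r) = c
      · rw [if_pos hcase, if_pos (hiff.mp hcase)]
        field_simp
      · rw [if_neg hcase, if_neg (fun hd => hcase (hiff.mpr hd))]
        simp
    rw [Finset.sum_congr rfl step, ← Finset.mul_sum]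
    congr 1
    rw [Finset.sum_comm]
    exact Finset.sum_congr rfl fun n _ => (Finset.mul_sum _ _ _).symm
  rw [key]
  rw [norm_mul]
  have h1r : ‖(1 / (r : ℂ))‖ = 1 / (r : ℝ) := by
    simp
  rw [h1r, Fr]
  apply mul_le_mul_of_nonneg_left _ (by positivity)
  calc ‖∑ n ∈ Finset.Icc 1 r, (e (-((n : ℝ) * c') / r) *
        ∑ m ∈ Finset.Icc 1 h, e ((m : ℝ) * (α + n / r)))‖
      ≤ ∑ n ∈ Finset.Icc 1 r, ‖e (-((n : ℝ) * c') / r) *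
        ∑ m ∈ Finset.Icc 1 h, e ((m : ℝ) * (α + n / r))‖ := norm_sum_le _ _
    _ ≤ ∑ n ∈ Finset.Icc 1 r,
        (if ‖((α + n / r : ℝ) : AddCircle (1 : ℝ))‖ = 0 then (h : ℝ)
          else min (h : ℝ) (1 / ‖((α + n / r : ℝ) : AddCircle (1 : ℝ))‖)) := by
        apply Finset.sum_le_sum
        intro n _
        rw [norm_mul, norm_e, one_mul]
        exact sum_e_bound h (α + n / r)
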